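/- In a complete digraph with nonnegative-length cycles, the function p(v) defined as the infimum over all vertices s and all directed paths from s to v of the path length is a valid potential: l(a,b) ≥ p(b) − p(a) for all a, b. -/

import Mathlib

theorem shortest_path_is_potential
    {V : Type*} [Fintype V] [Nonempty V] (l : V → V → ℝ)
    (hcyc : ∀ (m : ℕ) (c : Fin (m + 1) → V), c 0 = c (Fin.last m) →
      0 ≤ ∑ i : Fin m, l (c i.castSucc) (c i.succ))
    (p : V → ℝ)
    (hp : ∀ v : V, p v = sInf {x : ℝ | ∃ (m : ℕ) (c : Fin (m + 1) → V),
      c (Fin.last m) = v ∧ x = ∑ i : Fin m, l (c i.castSucc) (c i.succ)}) :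
    ∀ a b : V, p b - p a ≤ l a b := by
  classical
  -- ℕ-indexed version of the cycle hypothesis
  have hcyc' : ∀ (m : ℕ) (c : ℕ → V), c 0 = c m →
      0 ≤ ∑ i ∈ Finset.range m, l (c i) (c (i+1)) := by
    intro m c h
    have := hcyc m (fun i => c i.val) (by simpa using h)
    rw [← Fin.sum_univ_eq_sum_range (fun i => l (c i) (c (i+1))) m]
    simpa using this
  obtain ⟨x0⟩ := (inferInstance : Nonempty V)
  set M : ℝ := Finset.univ.sup' (Finset.univ_nonempty) (fun pq : V × V => |l pq.1 pq.2|)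
    with hMdef
  have hM0 : 0 ≤ M := by
    rw [hMdef]
    exact le_trans (abs_nonneg (l x0 x0))
      (Finset.le_sup' (fun pq : V × V => |l pq.1 pq.2|) (Finset.mem_univ (x0, x0)))
  have hMl : ∀ a b : V, -M ≤ l a b := by
    intro a b
    have h1 : |l a b| ≤ M := by
      rw [hMdef]
      exact Finset.le_sup' (fun pq : V × V => |l pq.1 pq.2|) (Finset.mem_univ (a, b))
    have := neg_abs_le (l a b)
    linarith
  set N := Fintype.card V with hN
  set B : ℝ := -(N : ℝ) * M with hB
  have key : ∀ m (c : ℕ → V), B ≤ ∑ i ∈ Finset.range m, l (c i) (c (i+1)) := by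
    intro m
    induction m using Nat.strong_induction_on with
    | _ m ih =>
      intro c
      by_cases hm : m ≤ N
      · have h1 : ∑ i ∈ Finset.range m, (-M) ≤ ∑ i ∈ Finset.range m, l (c i) (c (i+1)) :=
          Finset.sum_le_sum fun i _ => hMl _ _
        have h2 : B ≤ (m : ℝ) * (-M) := by
          rw [hB]
          have : (m : ℝ) ≤ (N : ℝ) := by exact_mod_cast hm
          nlinarith
        simpa using le_trans (by simpa [Finset.sum_const, mul_comm] using h2) h1
      · push_neg at hm
        -- pigeonhole: repeated vertex
        have hninj : ¬ Function.Injective (fun i : Fin (m+1) => c i.val) := by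
          intro hinj
          have := Fintype.card_le_of_injective _ hinj
          simp [hN] at this
          omega
        obtain ⟨i, j, hcij, hij⟩ := Function.not_injective_iff.mp hninj
        obtain ⟨a, b, hab, hcab, hbm⟩ : ∃ a b : ℕ, a < b ∧ c a = c b ∧ b ≤ m := by
          rcases lt_or_gt_of_ne (fun h => hij (Fin.ext h) : i.val ≠ j.val) with h | h
          · exact ⟨i.val, j.val, h, hcij, by omega⟩
          · exact ⟨j.val, i.val, h, hcij.symm, by omega⟩
        set k := b - a with hk
        set m' := m - k with hm'
        have hkpos : 0 < k := by omega
        have ha_m' : a ≤ m' := by omega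
        have hm'm : m' < m := by omega
        set c'' : ℕ → V := fun n => if n < a then c n else c (n + k) with hc''
        have ihc := ih m' hm'm c''
        -- decompose the sum of c
        have hsplit : ∑ i ∈ Finset.range m, l (c i) (c (i+1)) =
            (∑ i ∈ Finset.range a, l (c i) (c (i+1)))
            + (∑ i ∈ Finset.Ico a b, l (c i) (c (i+1)))
            + (∑ i ∈ Finset.Ico b m, l (c i) (c (i+1))) := by
          rw [Finset.range_eq_Ico,
            ← Finset.sum_Ico_consecutive _ (Nat.zero_le b) (hbm),
            ← Finset.sum_Ico_consecutive _ (Nat.zero_le a) (le_of_lt hab), Finset.range_eq_Ico]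
        -- cycle part nonneg
        have hcycle : 0 ≤ ∑ i ∈ Finset.Ico a b, l (c i) (c (i+1)) := by
          have := hcyc' (b - a) (fun n => c (a + n)) (by
            show c (a + 0) = c (a + (b - a))
            rw [Nat.add_sub_cancel' (le_of_lt hab)]
            simpa using hcab)
          rw [Finset.sum_Ico_eq_sum_range]
          refine le_of_le_of_eq this (Finset.sum_congr rfl fun t _ => ?_)
          rw [Nat.add_assoc]
        -- c'' sum equals the two outer parts
        have hc''sum : ∑ i ∈ Finset.range m', l (c'' i) (c'' (i+1)) =
            (∑ i ∈ Finset.range a, l (c i) (c (i+1)))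
            + (∑ i ∈ Finset.Ico b m, l (c i) (c (i+1))) := by
          rw [Finset.range_eq_Ico, ← Finset.sum_Ico_consecutive _ (Nat.zero_le a) ha_m',
            ← Finset.range_eq_Ico]
          congr 1
          · apply Finset.sum_congr rfl
            intro t ht
            rw [Finset.mem_range] at ht
            have h1 : c'' t = c t := by simp [hc'', ht]
            have h2 : c'' (t+1) = c (t+1) := by
              by_cases h : t + 1 < a
              · simp [hc'', h]
              · have hta : t + 1 = a := by omega
                simp only [hc'', hta, lt_irrefl, if_false]
                rw [show a + k = b by omega, ← hcab]
            rw [h1, h2]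
          · rw [Finset.sum_Ico_eq_sum_range, Finset.sum_Ico_eq_sum_range]
            have hlen : m' - a = m - b := by omega
            rw [hlen]
            apply Finset.sum_congr rfl
            intro t _
            have h1 : c'' (a + t) = c (b + t) := by
              simp only [hc'']
              rw [if_neg (by omega)]
              congr 1; omega
            have h2 : c'' (a + t + 1) = c (b + t + 1) := by
              simp only [hc'']
              rw [if_neg (by omega)]
              congr 1; omega
            rw [h1, h2]
        rw [hsplit]
        have := hc''sum ▸ ihc
        linarith
  -- the set defining p
  set S : V → Set ℝ := fun v => {x : ℝ | ∃ (m : ℕ) (c : Fin (m + 1) → V),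
      c (Fin.last m) = v ∧ x = ∑ i : Fin m, l (c i.castSucc) (c i.succ)} with hS
  -- convert Fin sums to range sums to get boundedness
  have hbdd : ∀ v, ∀ x ∈ S v, B ≤ x := by
    rintro v x ⟨m, c, -, rfl⟩
    set d : ℕ → V := fun n => c ⟨min n m, by omega⟩ with hd
    have heq : ∑ i : Fin m, l (c i.castSucc) (c i.succ)
        = ∑ i ∈ Finset.range m, l (d i) (d (i+1)) := by
      rw [← Fin.sum_univ_eq_sum_range (fun i => l (d i) (d (i+1))) m]
      apply Finset.sum_congr rfl
      intro t _
      have h1 : d t.val = c t.castSucc := by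
        simp only [hd]; congr 1
        exact Fin.ext (by simp [Nat.min_eq_left (le_of_lt t.isLt)])
      have h2 : d (t.val + 1) = c t.succ := by
        simp only [hd]; congr 1
        exact Fin.ext (by simp [Nat.min_eq_left (Nat.succ_le_of_lt t.isLt)])
      rw [h1, h2]
    rw [heq]
    exact key m d
  have hSbdd : ∀ v, BddBelow (S v) := fun v => ⟨B, fun x hx => hbdd v x hx⟩
  have hSne : ∀ v, (S v).Nonempty := by
    intro v
    exact ⟨0, 0, fun _ => v, rfl, by simp⟩
  intro a b
  rw [hp a, hp b]
  -- for any x ∈ S a, x + l a b ∈ S b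
  have hext : ∀ x ∈ S a, x + l a b ∈ S b := by
    rintro x ⟨m, c, hlast, rfl⟩
    refine ⟨m + 1, Fin.snoc c b, by simp, ?_⟩
    rw [Fin.sum_univ_castSucc]
    congr 1
    · apply Finset.sum_congr rfl
      intro t _
      rw [show (t.castSucc.castSucc : Fin (m+2)) = (t.castSucc : Fin (m+1)).castSucc from rfl,
        Fin.snoc_castSucc, Fin.succ_castSucc, Fin.snoc_castSucc]
    · rw [Fin.succ_last, Fin.snoc_last, Fin.snoc_castSucc, hlast]
  have h1 : ∀ x ∈ S a, sInf (S b) - l a b ≤ x := by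
    intro x hx
    have := csInf_le (hSbdd b) (hext x hx)
    linarith
  have h2 : sInf (S b) - l a b ≤ sInf (S a) := le_csInf (hSne a) h1
  linarith
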